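/- Let (V,g) be an n-dimensional real inner product space with orthonormal basis (e_1,...,e_n), let T : V × V → V be an alternating bilinear map such that (X,Y,Z) ↦ g(T(X,Y),Z) is totally antisymmetric, let h be a symmetric bilinear form with associated g-self-adjoint endomorphism H (h(u,v) = g(Hu,v)), and set g_t := g + t·h, e_i(t) := (Id + tH)^{-1/2} e_i for |t| small enough that Id + tH is positive definite. Define f(t) := (1/6) Σ_{i,j} g_t( T(e_i(t), e_j(t)), T(e_i(t), e_j(t)) ). Then f is differentiable at t = 0 and f'(0) = -(1/6) Σ_{i,j} S(e_i,e_j) h(e_i,e_j), where S(X,Y) := Σ_k g(T(e_k,X), T(e_k,Y)). (This is the first variation formula d/dt|_{t=0} ‖T‖²_{g(t)} = -(1/6)(S,h)_g for the squared norm of the torsion form.) -/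

import Mathlib

open scoped RealInnerProductSpace

set_option linter.unusedSectionVars false
set_option linter.unusedVariables false
set_option maxHeartbeats 1000000


noncomputable section TorsionAux

set_option linter.unusedSectionVars false

variable {V : Type*} [NormedAddCommGroup V] [InnerProductSpace ℝ V] [FiniteDimensional ℝ V]

/-- rank-one projection onto `w`. -/
noncomputable def projL (w : V) : V →ₗ[ℝ] V := ((innerSL ℝ w).toLinearMap).smulRight w

@[simp] lemma projL_apply (w v : V) : projL w v = ⟪w, v⟫ • w := rfl

/-- the candidate family `(Id + t H)^{-1/2}`, diagonal in the eigenbasis `b` of `H`. -/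
noncomputable def Fam {m : ℕ} (b : OrthonormalBasis (Fin m) ℝ V) (μ : Fin m → ℝ) (t : ℝ) :
    V →ₗ[ℝ] V := ∑ k, ((1 + t * μ k) ^ (-(1/2) : ℝ)) • projL (b k)

lemma Fam_apply {m : ℕ} (b : OrthonormalBasis (Fin m) ℝ V) (μ : Fin m → ℝ) (t : ℝ) (v : V) :
    Fam b μ t v = ∑ k, (((1 + t * μ k) ^ (-(1/2) : ℝ)) * ⟪b k, v⟫) • b k := by
  simp [Fam, LinearMap.sum_apply, smul_smul]

lemma Fam_basis {m : ℕ} (b : OrthonormalBasis (Fin m) ℝ V) (μ : Fin m → ℝ) (t : ℝ) (j : Fin m) :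
    Fam b μ t (b j) = ((1 + t * μ j) ^ (-(1/2) : ℝ)) • b j := by
  rw [Fam_apply]
  have horth := orthonormal_iff_ite.mp b.orthonormal
  rw [Finset.sum_eq_single j]
  · rw [horth j j]; simp
  · intro k _ hk; rw [horth k j]; simp [hk]
  · simp

lemma Fam_inner {m : ℕ} (b : OrthonormalBasis (Fin m) ℝ V) (μ : Fin m → ℝ) (t : ℝ) (u v : V) :
    ⟪Fam b μ t u, v⟫ = ∑ k, ((1 + t * μ k) ^ (-(1/2) : ℝ)) * (⟪b k, u⟫ * ⟪b k, v⟫) := by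
  rw [Fam_apply, sum_inner]
  congr 1; ext k
  rw [real_inner_smul_left]; ring

lemma Fam_sa {m : ℕ} (b : OrthonormalBasis (Fin m) ℝ V) (μ : Fin m → ℝ) (t : ℝ) (u v : V) :
    ⟪Fam b μ t u, v⟫ = ⟪u, Fam b μ t v⟫ := by
  rw [Fam_inner, real_inner_comm (Fam b μ t v) u, Fam_inner]
  congr 1; ext k; rw [mul_comm (⟪b k, v⟫) (⟪b k, u⟫)]

lemma Fam_pos {m : ℕ} (b : OrthonormalBasis (Fin m) ℝ V) (μ : Fin m → ℝ) (t : ℝ)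
    (hpos : ∀ k, 0 < 1 + t * μ k) (u : V) (hu : u ≠ 0) : 0 < ⟪Fam b μ t u, u⟫ := by
  rw [Fam_inner]
  have hex : ∃ k, ⟪b k, u⟫ ≠ 0 := by
    by_contra hc
    push_neg at hc
    apply hu
    have := b.sum_repr' u
    rw [← this]
    refine Finset.sum_eq_zero fun k _ => ?_
    rw [hc k]; simp
  obtain ⟨k0, hk0⟩ := hex
  refine Finset.sum_pos' (fun k _ => ?_) ⟨k0, Finset.mem_univ k0, ?_⟩
  · have h1 := Real.rpow_pos_of_pos (hpos k) (-(1/2) : ℝ)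
    have h2 : (0:ℝ) ≤ ⟪b k, u⟫ * ⟪b k, u⟫ := mul_self_nonneg _
    nlinarith
  · have h1 := Real.rpow_pos_of_pos (hpos k0) (-(1/2) : ℝ)
    have h2 : (0:ℝ) < ⟪b k0, u⟫ * ⟪b k0, u⟫ := by
      rcases lt_or_gt_of_ne hk0 with hlt | hgt
      · nlinarith
      · nlinarith
    nlinarith

-- square property
lemma Fam_sq {m : ℕ} (b : OrthonormalBasis (Fin m) ℝ V) (μ : Fin m → ℝ) (t : ℝ)
    (H : V →ₗ[ℝ] V) (hb : ∀ k, H (b k) = μ k • b k) (hpos : ∀ k, 0 < 1 + t * μ k) :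
    (Fam b μ t ∘ₗ Fam b μ t) ∘ₗ (LinearMap.id + t • H) = LinearMap.id := by
  apply b.toBasis.ext
  intro j
  simp only [LinearMap.comp_apply, LinearMap.add_apply, LinearMap.id_apply,
    LinearMap.smul_apply, OrthonormalBasis.coe_toBasis]
  rw [hb j]
  rw [show (b j : V) + t • μ j • b j = (1 + t * μ j) • b j by
    rw [add_smul, one_smul, smul_smul]]
  simp only [map_smul, Fam_basis, smul_smul]
  have hp := hpos j
  have : (1 + t * μ j) * ((1 + t * μ j) ^ (-(1/2) : ℝ) * (1 + t * μ j) ^ (-(1/2) : ℝ)) = 1 := by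
    rw [← Real.rpow_add hp]
    norm_num [Real.rpow_neg_one]
    exact mul_inv_cancel₀ (ne_of_gt hp)
  rw [mul_assoc, this, one_smul]

-- value at 0
lemma Fam_zero {m : ℕ} (b : OrthonormalBasis (Fin m) ℝ V) (μ : Fin m → ℝ) (v : V) :
    Fam b μ 0 v = v := by
  have : ∀ k, ((1 + (0:ℝ) * μ k) ^ (-(1/2) : ℝ)) = 1 := by
    intro k; norm_num
  calc Fam b μ 0 v = ∑ k, (((1 + (0:ℝ) * μ k) ^ (-(1/2) : ℝ)) * ⟪b k, v⟫) • b k := Fam_apply b μ 0 v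
    _ = ∑ k, ⟪b k, v⟫ • b k := by
        refine Finset.sum_congr rfl fun k _ => ?_; rw [this k, one_mul]
    _ = v := b.sum_repr' v

-- derivative
lemma Fam_hasDerivAt {m : ℕ} (b : OrthonormalBasis (Fin m) ℝ V) (μ : Fin m → ℝ) (v : V) :
    HasDerivAt (fun t => Fam b μ t v) (∑ k, (-(μ k)/2 * ⟪b k, v⟫) • b k) 0 := by
  have key : ∀ k : Fin m, HasDerivAt (fun t : ℝ => (1 + t * μ k) ^ (-(1/2) : ℝ)) (-(μ k)/2) 0 := by
    intro k
    have h1 : HasDerivAt (fun t : ℝ => 1 + t * μ k) (μ k) 0 := by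
      simpa using (hasDerivAt_mul_const (μ k)).const_add 1
    have h2 : HasDerivAt (fun x : ℝ => x ^ (-(1/2) : ℝ))
        ((-(1/2) : ℝ) * (1:ℝ) ^ ((-(1/2) : ℝ) - 1)) (1 : ℝ) :=
      Real.hasDerivAt_rpow_const (Or.inl one_ne_zero)
    have h3 := h2.comp_of_eq 0 h1 (by ring)
    have h4 : HasDerivAt (fun t : ℝ => (1 + t * μ k) ^ (-(1/2) : ℝ))
        ((-(1/2) : ℝ) * (1:ℝ) ^ ((-(1/2) : ℝ) - 1) * μ k) 0 := h3
    convert h4 using 1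
    rw [Real.one_rpow]
    ring
  have : (fun t => Fam b μ t v) = fun t => ∑ k, (((1 + t * μ k) ^ (-(1/2) : ℝ)) * ⟪b k, v⟫) • b k := by
    funext t; exact Fam_apply b μ t v
  rw [this]
  exact HasDerivAt.fun_sum fun k _ => ((key k).mul_const _).smul_const (b k)

-- uniqueness of commuting positive square roots
lemma sqrt_unique {A B : V →ₗ[ℝ] V}
    (hAB : A * B = B * A) (h2 : A * A = B * B)
    (hApos : ∀ u : V, u ≠ 0 → 0 < ⟪A u, u⟫) (hBpos : ∀ u : V, u ≠ 0 → 0 < ⟪B u, u⟫) :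
    A = B := by
  have hcomp : (A - B) * (A + B) = 0 := by
    rw [sub_mul, mul_add, mul_add, hAB, h2]
    abel
  have hinj : Function.Injective (A + B) := by
    rw [← LinearMap.ker_eq_bot, LinearMap.ker_eq_bot']
    intro u hu
    by_contra hu0
    have h1 : (0:ℝ) < ⟪(A + B) u, u⟫ := by
      rw [LinearMap.add_apply, inner_add_left]
      exact add_pos (hApos u hu0) (hBpos u hu0)
    rw [hu, inner_zero_left] at h1
    exact lt_irrefl 0 h1
  have hsurj := LinearMap.injective_iff_surjective.mp hinj
  ext v
  obtain ⟨u, hu⟩ := hsurj v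
  have := LinearMap.congr_fun hcomp u
  rw [Module.End.mul_apply, hu, LinearMap.zero_apply, LinearMap.sub_apply, sub_eq_zero] at this
  exact this

end TorsionAux

section TorsionId

variable {V : Type*} [NormedAddCommGroup V] [InnerProductSpace ℝ V] [FiniteDimensional ℝ V]
variable {n : ℕ} (e : OrthonormalBasis (Fin n) ℝ V) (T : V →ₗ[ℝ] V →ₗ[ℝ] V)

lemma expand_left (x y z : V) :
    ⟪T x y, z⟫ = ∑ l, ⟪e l, x⟫ * ⟪T (e l) y, z⟫ := by
  conv_lhs => rw [← e.sum_repr' x]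
  rw [map_sum, LinearMap.coe_sum, Finset.sum_apply, sum_inner]
  refine Finset.sum_congr rfl fun l _ => ?_
  rw [map_smul, LinearMap.smul_apply, real_inner_smul_left]

lemma parseval (x y : V) : ⟪x, y⟫ = ∑ j, ⟪e j, x⟫ * ⟪e j, y⟫ := by
  conv_lhs => rw [← e.sum_repr' x]
  rw [sum_inner]
  refine Finset.sum_congr rfl fun j _ => ?_
  rw [real_inner_smul_left]

variable (hT_alt : ∀ u : V, T u u = 0)
    (hT_anti : ∀ X Y Z : V, ⟪T X Y, Z⟫ = -⟪T X Z, Y⟫)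
    (H : V →ₗ[ℝ] V) (Hsym : ∀ u v : V, ⟪H u, v⟫ = ⟪u, H v⟫)

include hT_alt in
lemma T_swap (x y : V) : T x y = - T y x := by
  have := hT_alt (x + y)
  simp only [map_add, LinearMap.add_apply, hT_alt] at this
  have h2 : T x y + T y x = 0 := by
    rw [add_comm] at this
    rw [← this]; abel
  linear_combination (norm := abel1) h2

include hT_alt in
lemma Id1 :
    ∑ i, ∑ j, ⟪T (H (e i)) (e j), T (e i) (e j)⟫
      = ∑ i, ∑ j, (∑ k, ⟪T (e k) (e i), T (e k) (e j)⟫) * ⟪H (e i), e j⟫ := by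
  refine Finset.sum_congr rfl fun i _ => ?_
  calc ∑ j, ⟪T (H (e i)) (e j), T (e i) (e j)⟫
      = ∑ j, ∑ l, ⟪e l, H (e i)⟫ * ⟪T (e l) (e j), T (e i) (e j)⟫ :=
        Finset.sum_congr rfl fun j _ => expand_left e T _ _ _
    _ = ∑ l, ∑ j, ⟪e l, H (e i)⟫ * ⟪T (e l) (e j), T (e i) (e j)⟫ := Finset.sum_comm
    _ = ∑ l, (∑ j, ⟪T (e j) (e i), T (e j) (e l)⟫) * ⟪H (e i), e l⟫ := by
        refine Finset.sum_congr rfl fun l _ => ?_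
        rw [Finset.sum_mul]
        refine Finset.sum_congr rfl fun j _ => ?_
        rw [T_swap T hT_alt (e l) (e j), T_swap T hT_alt (e i) (e j), inner_neg_neg,
          real_inner_comm (T (e j) (e l)) (T (e j) (e i)), real_inner_comm (e l) (H (e i))]
        ring


lemma sum_swap4 {M : Type*} [AddCommMonoid M] (f : Fin n → Fin n → Fin n → Fin n → M) :
    ∑ i, ∑ j, ∑ k, ∑ l, f i j k l = ∑ k, ∑ l, ∑ i, ∑ j, f i j k l :=
  calc ∑ i, ∑ j, ∑ k, ∑ l, f i j k l
      = ∑ i, ∑ k, ∑ j, ∑ l, f i j k l :=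
        Finset.sum_congr rfl fun i _ => Finset.sum_comm
    _ = ∑ k, ∑ i, ∑ j, ∑ l, f i j k l := Finset.sum_comm
    _ = ∑ k, ∑ i, ∑ l, ∑ j, f i j k l :=
        Finset.sum_congr rfl fun k _ => Finset.sum_congr rfl fun i _ => Finset.sum_comm
    _ = ∑ k, ∑ l, ∑ i, ∑ j, f i j k l :=
        Finset.sum_congr rfl fun k _ => Finset.sum_comm

include hT_alt Hsym in
lemma Id2 :
    ∑ i, ∑ j, ⟪T (e i) (H (e j)), T (e i) (e j)⟫
      = ∑ i, ∑ j, (∑ k, ⟪T (e k) (e i), T (e k) (e j)⟫) * ⟪H (e i), e j⟫ := by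
  have step : ∀ i j : Fin n, ⟪T (e i) (H (e j)), T (e i) (e j)⟫
      = ⟪T (H (e j)) (e i), T (e j) (e i)⟫ := by
    intro i j
    rw [T_swap T hT_alt (e i) (H (e j)), T_swap T hT_alt (e i) (e j), inner_neg_neg]
  calc ∑ i, ∑ j, ⟪T (e i) (H (e j)), T (e i) (e j)⟫
      = ∑ i, ∑ j, ⟪T (H (e j)) (e i), T (e j) (e i)⟫ :=
        Finset.sum_congr rfl fun i _ => Finset.sum_congr rfl fun j _ => step i j
    _ = ∑ j, ∑ i, ⟪T (H (e j)) (e i), T (e j) (e i)⟫ := Finset.sum_comm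
    _ = ∑ j, ∑ i, (∑ k, ⟪T (e k) (e j), T (e k) (e i)⟫) * ⟪H (e j), e i⟫ :=
        Id1 e T hT_alt H
    _ = ∑ i, ∑ j, (∑ k, ⟪T (e k) (e j), T (e k) (e i)⟫) * ⟪H (e j), e i⟫ := Finset.sum_comm
    _ = ∑ i, ∑ j, (∑ k, ⟪T (e k) (e i), T (e k) (e j)⟫) * ⟪H (e i), e j⟫ := by
        refine Finset.sum_congr rfl fun i _ => Finset.sum_congr rfl fun j _ => ?_
        have h1 : ⟪H (e j), e i⟫ = ⟪H (e i), e j⟫ := by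
          rw [Hsym (e j) (e i), real_inner_comm]
        rw [h1]
        congr 1
        exact Finset.sum_congr rfl fun k _ => real_inner_comm _ _

include hT_anti Hsym in
lemma Id3 :
    ∑ i, ∑ j, ⟪H (T (e i) (e j)), T (e i) (e j)⟫
      = ∑ i, ∑ j, (∑ k, ⟪T (e k) (e i), T (e k) (e j)⟫) * ⟪H (e i), e j⟫ := by
  have hHw : ∀ w : V, ⟪H w, w⟫ = ∑ k, ∑ l, ⟪e k, w⟫ * ⟪e l, w⟫ * ⟪H (e k), e l⟫ := by
    intro w
    rw [parseval e (H w) w]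
    refine Finset.sum_congr rfl fun k _ => ?_
    have h1 : ⟪e k, H w⟫ = ⟪H (e k), w⟫ := (Hsym (e k) w).symm
    rw [h1, parseval e (H (e k)) w, Finset.sum_mul]
    refine Finset.sum_congr rfl fun l _ => ?_
    have h2 : ⟪e l, H (e k)⟫ = ⟪H (e k), e l⟫ := real_inner_comm _ _
    rw [h2]; ring
  calc ∑ i, ∑ j, ⟪H (T (e i) (e j)), T (e i) (e j)⟫
      = ∑ i, ∑ j, ∑ k, ∑ l,
          ⟪e k, T (e i) (e j)⟫ * ⟪e l, T (e i) (e j)⟫ * ⟪H (e k), e l⟫ :=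
        Finset.sum_congr rfl fun i _ => Finset.sum_congr rfl fun j _ => hHw _
    _ = ∑ k, ∑ l, ∑ i, ∑ j,
          ⟪e k, T (e i) (e j)⟫ * ⟪e l, T (e i) (e j)⟫ * ⟪H (e k), e l⟫ := sum_swap4 _
    _ = ∑ k, ∑ l, (∑ i, ∑ j,
          ⟪e k, T (e i) (e j)⟫ * ⟪e l, T (e i) (e j)⟫) * ⟪H (e k), e l⟫ := by
        refine Finset.sum_congr rfl fun k _ => Finset.sum_congr rfl fun l _ => ?_
        rw [Finset.sum_mul]
        exact Finset.sum_congr rfl fun i _ => (Finset.sum_mul _ _ _).symm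
    _ = ∑ k, ∑ l, (∑ i, ⟪T (e i) (e k), T (e i) (e l)⟫) * ⟪H (e k), e l⟫ := by
        refine Finset.sum_congr rfl fun k _ => Finset.sum_congr rfl fun l _ => ?_
        congr 1
        refine Finset.sum_congr rfl fun i _ => ?_
        rw [parseval e (T (e i) (e k)) (T (e i) (e l))]
        refine Finset.sum_congr rfl fun j _ => ?_
        have hk : ⟪e k, T (e i) (e j)⟫ = -⟪e j, T (e i) (e k)⟫ := by
          rw [real_inner_comm (T (e i) (e j)) (e k), hT_anti (e i) (e j) (e k),
            real_inner_comm (e j) (T (e i) (e k))]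
        have hl : ⟪e l, T (e i) (e j)⟫ = -⟪e j, T (e i) (e l)⟫ := by
          rw [real_inner_comm (T (e i) (e j)) (e l), hT_anti (e i) (e j) (e l),
            real_inner_comm (e j) (T (e i) (e l))]
        rw [hk, hl]; ring
    _ = ∑ i, ∑ j, (∑ k, ⟪T (e k) (e i), T (e k) (e j)⟫) * ⟪H (e i), e j⟫ := rfl

end TorsionId

/-- First variation of the squared norm of the torsion form. Let `(V, g)` be an
`n`-dimensional real inner product space with orthonormal basis `(e i)`, `T` an alternating
bilinear map with `(X, Y, Z) ↦ ⟪T X Y, Z⟫` totally antisymmetric, `h` a symmetric bilinear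
form with associated `g`-self-adjoint endomorphism `H`, and, for `|t| < δ`,
`E t = (Id + t • H)^{-1/2}` (i.e. `E t` is `g`-self-adjoint, positive definite, and
`(E t)² ∘ (Id + t • H) = Id`), so that `e_i(t) := E t (e i)` is a `g_t`-orthonormal basis
for `g_t := g + t • h`. Then
`f(t) := (1/6) Σ_{i,j} g_t(T(e_i(t), e_j(t)), T(e_i(t), e_j(t)))`
is differentiable at `t = 0` with `f'(0) = -(1/6) Σ_{i,j} S(e_i, e_j) h(e_i, e_j)`,
where `S(X, Y) := Σ_k ⟪T(e_k, X), T(e_k, Y)⟫`. -/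
theorem hasDerivAt_normSq_torsion
    {V : Type*} [NormedAddCommGroup V] [InnerProductSpace ℝ V] [FiniteDimensional ℝ V]
    {n : ℕ} (e : OrthonormalBasis (Fin n) ℝ V)
    (T : V →ₗ[ℝ] V →ₗ[ℝ] V)
    (hT_alt : ∀ u : V, T u u = 0)
    (hT_anti : ∀ X Y Z : V, ⟪T X Y, Z⟫ = -⟪T X Z, Y⟫)
    (h : LinearMap.BilinForm ℝ V)
    (h_symm : ∀ u v : V, h u v = h v u)
    (H : V →ₗ[ℝ] V)
    (hH : ∀ u v : V, h u v = ⟪H u, v⟫)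
    (E : ℝ → V →ₗ[ℝ] V) (δ : ℝ) (hδ : 0 < δ)
    (hE_sa : ∀ t : ℝ, |t| < δ → ∀ u v : V, ⟪E t u, v⟫ = ⟪u, E t v⟫)
    (hE_pos : ∀ t : ℝ, |t| < δ → ∀ u : V, u ≠ 0 → 0 < ⟪E t u, u⟫)
    (hE_sq : ∀ t : ℝ, |t| < δ →
      (E t ∘ₗ E t) ∘ₗ (LinearMap.id + t • H) = LinearMap.id) :
    HasDerivAt
      (fun t : ℝ => (1 / 6 : ℝ) * ∑ i : Fin n, ∑ j : Fin n,
        (⟪T (E t (e i)) (E t (e j)), T (E t (e i)) (E t (e j))⟫ +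
          t * h (T (E t (e i)) (E t (e j))) (T (E t (e i)) (E t (e j)))))
      (-(1 / 6 : ℝ) * ∑ i : Fin n, ∑ j : Fin n,
        (∑ k : Fin n, ⟪T (e k) (e i), T (e k) (e j)⟫) * h (e i) (e j)) 0 := by
  classical
  simp only [hH]
  -- H is symmetric
  have Hsym : ∀ u v : V, ⟪H u, v⟫ = ⟪u, H v⟫ := by
    intro u v
    rw [← hH u v, h_symm u v, hH v u]
    exact real_inner_comm _ _
  have HsymIs : (H : V →ₗ[ℝ] V).IsSymmetric := fun u v => Hsym u v
  set m := Module.finrank ℝ V with hm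
  let b : OrthonormalBasis (Fin m) ℝ V := HsymIs.eigenvectorBasis rfl
  let μ : Fin m → ℝ := HsymIs.eigenvalues rfl
  have hb : ∀ k, H (b k) = μ k • b k := fun k => HsymIs.apply_eigenvectorBasis rfl k
  -- a radius on which 1 + t μ k stays positive
  set M : ℝ := 1 + ∑ k, |μ k| with hM
  have hMpos : (0:ℝ) < M := by
    have : (0:ℝ) ≤ ∑ k, |μ k| := Finset.sum_nonneg fun k _ => abs_nonneg _
    rw [hM]; linarith
  set δ' : ℝ := min δ M⁻¹ with hδ'
  have hδ'pos : 0 < δ' := lt_min hδ (by positivity)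
  have hpos : ∀ t : ℝ, |t| < δ' → ∀ k, 0 < 1 + t * μ k := by
    intro t ht k
    have h1 : |μ k| ≤ M := by
      have h0 := Finset.single_le_sum (f := fun k => |μ k|) (fun k _ => abs_nonneg _)
        (Finset.mem_univ k)
      rw [hM]; linarith
    have h2 : |t| < M⁻¹ := lt_of_lt_of_le ht (min_le_right _ _)
    have h3 : |t * μ k| < 1 := by
      rw [abs_mul]
      calc |t| * |μ k| ≤ |t| * M := mul_le_mul_of_nonneg_left h1 (abs_nonneg t)
        _ < M⁻¹ * M := by
            exact mul_lt_mul_of_pos_right h2 hMpos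
        _ = 1 := inv_mul_cancel₀ (ne_of_gt hMpos)
    have h4 := neg_abs_le (t * μ k)
    linarith
  -- E coincides with the explicit family Fam
  have hEF : ∀ t : ℝ, |t| < δ' → E t = Fam b μ t := by
    intro t ht
    have htδ : |t| < δ := lt_of_lt_of_le ht (min_le_left _ _)
    have hposk := hpos t ht
    set P : V →ₗ[ℝ] V := LinearMap.id + t • H with hP
    have hPb : ∀ j, P (b j) = (1 + t * μ j) • b j := by
      intro j
      simp only [hP, LinearMap.add_apply, LinearMap.id_apply, LinearMap.smul_apply, hb j,
        add_smul, one_smul, smul_smul]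
    have hPsym : ∀ u v : V, ⟪P u, v⟫ = ⟪u, P v⟫ := by
      intro u v
      simp only [hP, LinearMap.add_apply, LinearMap.id_apply, LinearMap.smul_apply,
        inner_add_left, inner_add_right, real_inner_smul_left, real_inner_smul_right, Hsym u v]
    have h1 : (E t * E t) * P = 1 := by
      rw [Module.End.mul_eq_comp, Module.End.mul_eq_comp, Module.End.one_eq_id]
      exact hE_sq t htδ
    have h2 : P * (E t * E t) = 1 := mul_eq_one_comm.mp h1
    have hAQ : Commute (E t) (E t * E t) := (Commute.refl (E t)).mul_right (Commute.refl (E t))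
    let u : (V →ₗ[ℝ] V)ˣ := ⟨E t * E t, P, h1, h2⟩
    have hAP : Commute (E t) P :=
      (show Commute (E t) (u : V →ₗ[ℝ] V) from hAQ).units_inv_right
    have hEigen : ∀ k, P (E t (b k)) = (1 + t * μ k) • E t (b k) := by
      intro k
      have h3 := LinearMap.congr_fun hAP.eq (b k)
      rw [Module.End.mul_apply, Module.End.mul_apply] at h3
      rw [← h3, hPb k, map_smul]
    have hFw : ∀ (p : ℝ) (w : V), P w = p • w → Fam b μ t w = p ^ (-(1/2):ℝ) • w := by
      intro p w hw
      rw [Fam_apply]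
      have hterm : ∀ j, ((1 + t * μ j) ^ (-(1/2):ℝ) * ⟪b j, w⟫) • b j
          = (p ^ (-(1/2):ℝ) * ⟪b j, w⟫) • b j := by
        intro j
        by_cases hz : ⟪b j, w⟫ = 0
        · rw [hz, mul_zero, mul_zero]
        · have e1 : ⟪b j, P w⟫ = p * ⟪b j, w⟫ := by rw [hw, real_inner_smul_right]
          have e2 : ⟪b j, P w⟫ = (1 + t * μ j) * ⟪b j, w⟫ := by
            rw [← hPsym (b j) w, hPb j, real_inner_smul_left]
          have e3 : (1 + t * μ j) = p := mul_right_cancel₀ hz (by rw [← e2, e1])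
          rw [e3]
      rw [Finset.sum_congr rfl (fun j _ => hterm j)]
      calc ∑ j, (p ^ (-(1/2):ℝ) * ⟪b j, w⟫) • b j
          = p ^ (-(1/2):ℝ) • ∑ j, ⟪b j, w⟫ • b j := by
            rw [Finset.smul_sum]
            exact Finset.sum_congr rfl fun j _ => (smul_smul _ _ _).symm
        _ = p ^ (-(1/2):ℝ) • w := by rw [b.sum_repr' w]
    have hcomm : E t * Fam b μ t = Fam b μ t * E t := by
      apply b.toBasis.ext
      intro k
      rw [OrthonormalBasis.coe_toBasis, Module.End.mul_apply, Module.End.mul_apply,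
        Fam_basis, map_smul, hFw (1 + t * μ k) (E t (b k)) (hEigen k)]
    have hF2 : (Fam b μ t * Fam b μ t) * P = 1 := by
      rw [Module.End.mul_eq_comp, Module.End.mul_eq_comp, Module.End.one_eq_id]
      exact Fam_sq b μ t H hb hposk
    have hPF2 : P * (Fam b μ t * Fam b μ t) = 1 := mul_eq_one_comm.mp hF2
    have hsq : E t * E t = Fam b μ t * Fam b μ t := by
      calc E t * E t = (E t * E t) * (P * (Fam b μ t * Fam b μ t)) := by rw [hPF2, mul_one]
        _ = ((E t * E t) * P) * (Fam b μ t * Fam b μ t) :=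
            (mul_assoc (E t * E t) P (Fam b μ t * Fam b μ t)).symm
        _ = Fam b μ t * Fam b μ t := by rw [h1, one_mul]
    exact sqrt_unique hcomm hsq (hE_pos t htδ) (fun w hw => Fam_pos b μ t hposk w hw)
  -- derivative of the basis curves
  have hu : ∀ i : Fin n, HasDerivAt (fun t => Fam b μ t (e i)) ((-(1/2) : ℝ) • H (e i)) 0 := by
    intro i
    have h0 := Fam_hasDerivAt b μ (e i)
    convert h0 using 1
    have hHei : H (e i) = ∑ k, (μ k * ⟪b k, e i⟫) • b k := by
      conv_lhs => rw [← b.sum_repr' (e i)]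
      rw [map_sum]
      refine Finset.sum_congr rfl fun k _ => ?_
      rw [map_smul, hb k, smul_smul, mul_comm]
    rw [hHei, Finset.smul_sum]
    refine Finset.sum_congr rfl fun k _ => ?_
    rw [smul_smul]
    congr 1
    ring
  have hu0 : ∀ i : Fin n, Fam b μ 0 (e i) = e i := fun i => Fam_zero b μ (e i)
  -- continuous versions of T and H
  let Tc : V →L[ℝ] V →L[ℝ] V := LinearMap.toContinuousLinearMap
    ((LinearMap.toContinuousLinearMap : (V →ₗ[ℝ] V) ≃ₗ[ℝ] (V →L[ℝ] V)).toLinearMap ∘ₗ T)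
  have hTc : ∀ x y : V, Tc x y = T x y := fun x y => rfl
  let Hc : V →L[ℝ] V := LinearMap.toContinuousLinearMap H
  have hHc : ∀ x : V, Hc x = H x := fun x => rfl
  -- derivative of each torsion curve
  have hw : ∀ i j : Fin n, HasDerivAt (fun t => T (Fam b μ t (e i)) (Fam b μ t (e j)))
      (T ((-(1/2) : ℝ) • H (e i)) (e j) + T (e i) ((-(1/2) : ℝ) • H (e j))) 0 := by
    intro i j
    have hci : HasDerivAt (fun t => Tc (Fam b μ t (e i))) (Tc ((-(1/2) : ℝ) • H (e i))) 0 :=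
      (Tc.hasFDerivAt).comp_hasDerivAt 0 (hu i)
    have hres := hci.clm_apply (hu j)
    rw [hu0 i, hu0 j] at hres
    exact hres
  -- each summand has a derivative
  have hsummand : ∀ i j : Fin n, HasDerivAt
      (fun t => (⟪T (Fam b μ t (e i)) (Fam b μ t (e j)), T (Fam b μ t (e i)) (Fam b μ t (e j))⟫ +
        t * ⟪H (T (Fam b μ t (e i)) (Fam b μ t (e j))), T (Fam b μ t (e i)) (Fam b μ t (e j))⟫))
      ((⟪T (e i) (e j), T ((-(1/2) : ℝ) • H (e i)) (e j) + T (e i) ((-(1/2) : ℝ) • H (e j))⟫ +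
        ⟪T ((-(1/2) : ℝ) • H (e i)) (e j) + T (e i) ((-(1/2) : ℝ) • H (e j)), T (e i) (e j)⟫) +
       (1 * ⟪H (T (e i) (e j)), T (e i) (e j)⟫ + 0 *
         (⟪H (T (e i) (e j)), T ((-(1/2) : ℝ) • H (e i)) (e j) + T (e i) ((-(1/2) : ℝ) • H (e j))⟫ +
          ⟪H (T ((-(1/2) : ℝ) • H (e i)) (e j) + T (e i) ((-(1/2) : ℝ) • H (e j))), T (e i) (e j)⟫))) 0 := by
    intro i j
    have hwc := hw i j
    have hA := HasDerivAt.inner ℝ hwc hwc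
    have hHw : HasDerivAt (fun t => H (T (Fam b μ t (e i)) (Fam b μ t (e j))))
        (H (T ((-(1/2) : ℝ) • H (e i)) (e j) + T (e i) ((-(1/2) : ℝ) • H (e j)))) 0 :=
      (Hc.hasFDerivAt).comp_hasDerivAt 0 hwc
    have hB0 := HasDerivAt.inner ℝ hHw hwc
    have hB := (hasDerivAt_id (0:ℝ)).mul hB0
    have hAB := hA.add hB
    simp only [hu0 i, hu0 j, id_eq] at hAB ⊢
    exact hAB
  -- assemble
  have htotal := HasDerivAt.const_mul (1/6 : ℝ)
    (HasDerivAt.fun_sum (u := Finset.univ) fun i _ =>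
      HasDerivAt.fun_sum (u := Finset.univ) fun j _ => hsummand i j)
  -- identify the derivative value
  have hvalue : (1/6 : ℝ) * (∑ i : Fin n, ∑ j : Fin n,
      ((⟪T (e i) (e j), T ((-(1/2) : ℝ) • H (e i)) (e j) + T (e i) ((-(1/2) : ℝ) • H (e j))⟫ +
        ⟪T ((-(1/2) : ℝ) • H (e i)) (e j) + T (e i) ((-(1/2) : ℝ) • H (e j)), T (e i) (e j)⟫) +
       (1 * ⟪H (T (e i) (e j)), T (e i) (e j)⟫ + 0 *
         (⟪H (T (e i) (e j)), T ((-(1/2) : ℝ) • H (e i)) (e j) + T (e i) ((-(1/2) : ℝ) • H (e j))⟫ +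
          ⟪H (T ((-(1/2) : ℝ) • H (e i)) (e j) + T (e i) ((-(1/2) : ℝ) • H (e j))), T (e i) (e j)⟫))))
      = -(1 / 6 : ℝ) * ∑ i : Fin n, ∑ j : Fin n,
        (∑ k : Fin n, ⟪T (e k) (e i), T (e k) (e j)⟫) * ⟪H (e i), e j⟫ := by
    have hterm : ∀ i j : Fin n,
        ((⟪T (e i) (e j), T ((-(1/2) : ℝ) • H (e i)) (e j) + T (e i) ((-(1/2) : ℝ) • H (e j))⟫ +
          ⟪T ((-(1/2) : ℝ) • H (e i)) (e j) + T (e i) ((-(1/2) : ℝ) • H (e j)), T (e i) (e j)⟫) +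
         (1 * ⟪H (T (e i) (e j)), T (e i) (e j)⟫ + 0 *
           (⟪H (T (e i) (e j)), T ((-(1/2) : ℝ) • H (e i)) (e j) + T (e i) ((-(1/2) : ℝ) • H (e j))⟫ +
            ⟪H (T ((-(1/2) : ℝ) • H (e i)) (e j) + T (e i) ((-(1/2) : ℝ) • H (e j))), T (e i) (e j)⟫)))
        = -⟪T (H (e i)) (e j), T (e i) (e j)⟫ - ⟪T (e i) (H (e j)), T (e i) (e j)⟫ +
            ⟪H (T (e i) (e j)), T (e i) (e j)⟫ := by
      intro i j
      have e1 : T ((-(1/2) : ℝ) • H (e i)) (e j) = (-(1/2) : ℝ) • T (H (e i)) (e j) := by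
        rw [map_smul, LinearMap.smul_apply]
      have e2 : T (e i) ((-(1/2) : ℝ) • H (e j)) = (-(1/2) : ℝ) • T (e i) (H (e j)) := by
        rw [map_smul]
      rw [e1, e2]
      rw [inner_add_left, inner_add_right, real_inner_smul_left, real_inner_smul_left,
        real_inner_smul_right, real_inner_smul_right,
        real_inner_comm (T (e i) (e j)) (T (H (e i)) (e j)),
        real_inner_comm (T (e i) (e j)) (T (e i) (H (e j)))]
      ring
    rw [Finset.sum_congr rfl (fun i _ => Finset.sum_congr rfl (fun j _ => hterm i j))]
    have hsplit : ∑ i : Fin n, ∑ j : Fin n,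
        (-⟪T (H (e i)) (e j), T (e i) (e j)⟫ - ⟪T (e i) (H (e j)), T (e i) (e j)⟫ +
          ⟪H (T (e i) (e j)), T (e i) (e j)⟫)
        = -(∑ i, ∑ j, ⟪T (H (e i)) (e j), T (e i) (e j)⟫)
          - (∑ i, ∑ j, ⟪T (e i) (H (e j)), T (e i) (e j)⟫)
          + (∑ i, ∑ j, ⟪H (T (e i) (e j)), T (e i) (e j)⟫) := by
      simp only [Finset.sum_add_distrib, Finset.sum_sub_distrib, Finset.sum_neg_distrib]
    rw [hsplit, Id1 e T hT_alt H, Id2 e T hT_alt H Hsym, Id3 e T hT_anti H Hsym]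
    ring
  rw [← hvalue]
  -- pass from E to Fam by local equality
  apply htotal.congr_of_eventuallyEq
  have hball : ∀ᶠ t in nhds (0:ℝ), |t| < δ' := by
    have := Metric.ball_mem_nhds (0:ℝ) hδ'pos
    filter_upwards [this] with t ht
    rwa [Metric.mem_ball, Real.dist_eq, sub_zero] at ht
  filter_upwards [hball] with t ht
  rw [hEF t ht]
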